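/- Let L > 0, μ ≤ 0, 0 < μ_p ≤ L, and set c = μ + L + √(μ² − Lμ + L²). Define h : (0, 2/L) → ℝ by: h(t) = [ (μ_p(1 − Lt) + √((L − μ)(μ − μ_p)(2 − Lt)μ_p t + (L − μ)²)) / (L − μ + μ_p) ]² for t ∈ (0, 1/L); h(t) = ((Lt − 2)(μt − 2)μ_p t)/((L + μ − μ_p)t − 2) + 1 for t ∈ [1/L, 3/c]; and h(t) = (Lt − 1)²/((Lt − 1)² + μ_p t(2 − Lt)) for t ∈ (3/c, 2/L). Define the cubic r(t) = Lμ(L + μ − μ_p)t³ − (L² − μ_p(L + μ) + 5Lμ + μ²)t² + 4(L + μ)t − 4. Then: (a) if t̄ ∈ [1/L, 3/c] satisfies r(t̄) = 0, then h(t̄) ≤ h(t) for all t ∈ (0, 2/L); (b) if r has no root in [1/L, 3/c], then h(3/c) ≤ h(t) for all t ∈ (0, 2/L). -/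

import Mathlib

open Set
open scoped RealInnerProductSpace

private lemma aux_A (L m p c s t : ℝ) (hL : 0 < L) (hm : m ≤ 0) (hp : 0 < p) (hpL : p ≤ L)
    (hc2 : c ^ 2 = 2 * (L + m) * c - 3 * L * m) (hcL : L < c) (hc3 : 3 * L < 2 * c)
    (hc2L : c ≤ 2 * L)
    (ht1 : 1 ≤ L * t) (hs1 : 1 ≤ L * s) (hs2 : c * s ≤ 3) :
    0 ≤ 4 * (L + m) + 2 * p * s * (L + m) - 2 * s * (L ^ 2 + 4 * L * m + m ^ 2)
      - 2 * L * m * t + L * m * (L + m - p) * s * (2 * s + t) := by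
  have hs0 : 0 < s := by nlinarith
  have hLs2 : L * s < 2 := by nlinarith [mul_pos (by linarith : (0:ℝ) < 2 * c - 3 * L) hs0]
  have hB0 : 0 ≤ 4 * L + 2 * m - s * (2 * L ^ 2 + 7 * L * m + m ^ 2)
      + 2 * L * m * (L + m) * s ^ 2 := by
    nlinarith [mul_nonneg (sub_nonneg.2 hs1) (sub_nonneg.2 hs2), sq_nonneg (L * s - 1),
      sq_nonneg (c * s - 3),
      mul_nonneg (neg_nonneg.2 hm) (sub_nonneg.2 hs1), mul_nonneg (neg_nonneg.2 hm) (sub_nonneg.2 hs2),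
      mul_nonneg (mul_nonneg (neg_nonneg.2 hm) (sub_nonneg.2 hs1)) (sub_nonneg.2 hs2),
      mul_nonneg (mul_nonneg (neg_nonneg.2 hm) (neg_nonneg.2 hm))
        (mul_nonneg (sub_nonneg.2 hs1) (sub_nonneg.2 hs2)),
      mul_pos (sub_pos.2 hcL) hL, sq_nonneg (c - 2 * L), sq_nonneg (L + m),
      sq_nonneg (c * s - 2 * L * s),
      mul_nonneg (mul_nonneg hL.le (neg_nonneg.2 hm))
        (mul_nonneg (sub_nonneg.2 hs1) (sub_nonneg.2 hs2)),
      mul_pos (sub_pos.2 hc3) (sub_pos.2 hcL)]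
  have hDs : (L + m - p) * s - 2 < 0 := by
    nlinarith [mul_nonpos_of_nonpos_of_nonneg (by linarith : m - p ≤ 0) hs0.le]
  have hLm : 0 ≤ L * m * ((L + m - p) * s - 2) := by
    nlinarith [mul_nonneg (mul_nonneg hL.le (neg_nonneg.2 hm))
      (by linarith : 0 ≤ 2 - ((L + m - p) * s))]
  have hT1 : 0 ≤ L * m * ((L + m - p) * s - 2) * (L * t - 1) := mul_nonneg hLm (by linarith)
  have hT2 : 0 ≤ L * p * s * (2 * L + m - 2 * L * m * s) := by
    have h2 : 0 ≤ 2 * L + m - 2 * L * m * s := by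
      nlinarith [mul_nonneg (neg_nonneg.2 hm) (sub_nonneg.2 hs1)]
    exact mul_nonneg (by positivity) h2
  nlinarith [hT1, hT2, mul_nonneg hL.le hB0]

private lemma aux_mono (L m p c s t : ℝ) (hL : 0 < L) (hm : m ≤ 0) (hp : 0 < p) (hpL : p ≤ L)
    (hc2 : c ^ 2 = 2 * (L + m) * c - 3 * L * m) (hcL : L < c) (hc3 : 3 * L < 2 * c)
    (hc2L : c ≤ 2 * L)
    (ht1 : 1 ≤ L * t) (ht2 : c * t ≤ 3) (hs1 : 1 ≤ L * s) (hs2 : c * s ≤ 3)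
    (hord : 0 ≤ (t - s) * (L * m * (L + m - p) * s ^ 3 -
      (L ^ 2 - p * (L + m) + 5 * L * m + m ^ 2) * s ^ 2 + 4 * (L + m) * s - 4)) :
    (L * s - 2) * (m * s - 2) * p * s / ((L + m - p) * s - 2) + 1 ≤
      (L * t - 2) * (m * t - 2) * p * t / ((L + m - p) * t - 2) + 1 := by
  have hs0 : 0 < s := by nlinarith
  have ht0 : 0 < t := by nlinarith
  have hDs : (L + m - p) * s - 2 < 0 := by
    have hLs2 : L * s < 2 := by nlinarith [mul_pos (by linarith : (0:ℝ) < 2 * c - 3 * L) hs0]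
    nlinarith [mul_nonpos_of_nonpos_of_nonneg (by linarith : m - p ≤ 0) hs0.le]
  have hDt : (L + m - p) * t - 2 < 0 := by
    have hLt2 : L * t < 2 := by nlinarith [mul_pos (by linarith : (0:ℝ) < 2 * c - 3 * L) ht0]
    nlinarith [mul_nonpos_of_nonpos_of_nonneg (by linarith : m - p ≤ 0) ht0.le]
  have hA := aux_A L m p c s t hL hm hp hpL hc2 hcL hc3 hc2L ht1 hs1 hs2
  have hP : 0 ≤ (L * t - 2) * (m * t - 2) * p * t * ((L + m - p) * s - 2) -
      (L * s - 2) * (m * s - 2) * p * s * ((L + m - p) * t - 2) := by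
    nlinarith [mul_nonneg (mul_nonneg hp.le (sq_nonneg (t - s))) hA,
      mul_nonneg (by positivity : (0:ℝ) ≤ 2 * p) hord]
  have hprod : 0 < ((L + m - p) * t - 2) * ((L + m - p) * s - 2) :=
    mul_pos_of_neg_of_neg hDt hDs
  have hP' : 0 ≤ (L * t - 2) * (m * t - 2) * p * t * ((L + m - p) * s - 2) -
      ((L + m - p) * t - 2) * ((L * s - 2) * (m * s - 2) * p * s) := by linarith [hP]
  have hdiv : 0 ≤ ((L * t - 2) * (m * t - 2) * p * t * ((L + m - p) * s - 2) -
      ((L + m - p) * t - 2) * ((L * s - 2) * (m * s - 2) * p * s)) /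
      (((L + m - p) * t - 2) * ((L + m - p) * s - 2)) := div_nonneg hP' hprod.le
  rw [← div_sub_div _ _ hDt.ne hDs.ne] at hdiv
  linarith

private lemma aux_I1 (L m p u : ℝ) (hL : 0 < L) (hm : m ≤ 0) (hp : 0 < p)
    (hu : L * u = 1) :
    (L - m) * (L * (L - m) - p * (p - m)) / L / (L - m + p) ^ 2 =
      (L * u - 2) * (m * u - 2) * p * u / ((L + m - p) * u - 2) + 1 := by
  have hu0 : 0 < u := by nlinarith
  have hd : (0:ℝ) < L - m + p := by linarith
  have hDu : (L + m - p) * u - 2 < 0 := by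
    nlinarith [mul_nonpos_of_nonpos_of_nonneg (by linarith : m - p ≤ 0) hu0.le]
  rw [div_add_one hDu.ne, div_div, div_eq_div_iff (by positivity) hDu.ne]
  have hu' : u = L⁻¹ := by field_simp; linarith
  subst hu'
  field_simp
  ring

private lemma aux_region1 (L m p t : ℝ) (hL : 0 < L) (hm : m ≤ 0) (hp : 0 < p) (hpL : p ≤ L)
    (ht0 : 0 < t) (htA : L * t < 1) :
    (L - m) * (L * (L - m) - p * (p - m)) / L / (L - m + p) ^ 2 ≤
      ((p * (1 - L * t) +
        Real.sqrt ((L - m) * (m - p) * (2 - L * t) * p * t + (L - m) ^ 2)) / (L - m + p)) ^ 2 := by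
  have hd : (0:ℝ) < L - m + p := by linarith
  have hW : 0 ≤ (L - m) * (L * (L - m) - p * (p - m)) := by
    have h1 : 0 ≤ L * (L - m) - p * (p - m) := by
      nlinarith [mul_nonpos_of_nonpos_of_nonneg hm (by linarith : (0:ℝ) ≤ L - p),
        mul_nonneg (sub_nonneg.2 hpL) (by positivity : (0:ℝ) ≤ L + p)]
    exact mul_nonneg (by linarith) h1
  have hWL : 0 ≤ (L - m) * (L * (L - m) - p * (p - m)) / L := by positivity
  have hV1X : (L - m) * (L * (L - m) - p * (p - m)) / L ≤
      (L - m) * (m - p) * (2 - L * t) * p * t + (L - m) ^ 2 := by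
    rw [div_le_iff₀ hL]
    nlinarith [mul_nonneg (mul_nonneg (mul_nonneg (by linarith : (0:ℝ) ≤ L - m)
      (by linarith : (0:ℝ) ≤ p - m)) hp.le) (sq_nonneg (L * t - 1))]
  have hsq : Real.sqrt ((L - m) * (L * (L - m) - p * (p - m)) / L) ≤
      Real.sqrt ((L - m) * (m - p) * (2 - L * t) * p * t + (L - m) ^ 2) :=
    Real.sqrt_le_sqrt hV1X
  have hnum : Real.sqrt ((L - m) * (L * (L - m) - p * (p - m)) / L) ≤
      p * (1 - L * t) + Real.sqrt ((L - m) * (m - p) * (2 - L * t) * p * t + (L - m) ^ 2) := by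
    have : 0 ≤ p * (1 - L * t) := mul_nonneg hp.le (by linarith)
    linarith
  have h0 : 0 ≤ Real.sqrt ((L - m) * (L * (L - m) - p * (p - m)) / L) := Real.sqrt_nonneg _
  have key : (L - m) * (L * (L - m) - p * (p - m)) / L / (L - m + p) ^ 2 =
      (Real.sqrt ((L - m) * (L * (L - m) - p * (p - m)) / L) / (L - m + p)) ^ 2 := by
    rw [div_pow, Real.sq_sqrt hWL]
  rw [key]
  apply pow_le_pow_left₀ (by positivity)
  exact div_le_div_of_nonneg_right hnum hd.le

private lemma aux_I3 (L m p c s : ℝ) (hL : 0 < L) (hm : m ≤ 0) (hp : 0 < p)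
    (hc3 : 3 * L < 2 * c) (hs1 : 1 ≤ L * s) (hs2 : c * s ≤ 3)
    (hrel : L * m * s ^ 2 - 2 * (L + m) * s + 3 = 0) :
    (L * s - 2) * (m * s - 2) * p * s / ((L + m - p) * s - 2) + 1 =
      (L * s - 1) ^ 2 / ((L * s - 1) ^ 2 + p * s * (2 - L * s)) := by
  have hs0 : 0 < s := by nlinarith
  have hLs2 : L * s < 2 := by nlinarith [mul_pos (by linarith : (0:ℝ) < 2 * c - 3 * L) hs0]
  have hDs : (L + m - p) * s - 2 < 0 := by
    nlinarith [mul_nonpos_of_nonpos_of_nonneg (by linarith : m - p ≤ 0) hs0.le]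
  have hden3 : 0 < (L * s - 1) ^ 2 + p * s * (2 - L * s) := by
    have : 0 < p * s * (2 - L * s) := mul_pos (mul_pos hp hs0) (by linarith)
    nlinarith [sq_nonneg (L * s - 1)]
  rw [div_add_one hDs.ne, div_eq_div_iff hDs.ne hden3.ne']
  linear_combination (p * s^2 * (L - p) * (L * s - 2)) * hrel

private lemma aux_region3 (L p s t : ℝ) (hL : 0 < L) (hp : 0 < p)
    (hs1 : 1 ≤ L * s) (hst : s ≤ t) (ht2 : L * t < 2) :
    (L * s - 1) ^ 2 / ((L * s - 1) ^ 2 + p * s * (2 - L * s)) ≤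
      (L * t - 1) ^ 2 / ((L * t - 1) ^ 2 + p * t * (2 - L * t)) := by
  have hs0 : 0 < s := by nlinarith
  have ht0 : 0 < t := lt_of_lt_of_le hs0 hst
  have hLs2 : L * s < 2 := by nlinarith
  have hdenS : 0 < (L * s - 1) ^ 2 + p * s * (2 - L * s) := by
    have : 0 < p * s * (2 - L * s) := mul_pos (mul_pos hp hs0) (by linarith)
    nlinarith [sq_nonneg (L * s - 1)]
  have hdenT : 0 < (L * t - 1) ^ 2 + p * t * (2 - L * t) := by
    have : 0 < p * t * (2 - L * t) := mul_pos (mul_pos hp ht0) (by linarith)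
    nlinarith [sq_nonneg (L * t - 1)]
  rw [div_le_div_iff₀ hdenS hdenT]
  nlinarith [mul_nonneg (mul_nonneg hp.le (sub_nonneg.2 hst))
    (by nlinarith : (0:ℝ) ≤ L * s + L * t - 2)]


theorem stmt_4 (L μ μp c : ℝ) (hL : 0 < L) (hμ : μ ≤ 0) (hμp : 0 < μp) (hμpL : μp ≤ L)
    (hc : c = μ + L + Real.sqrt (μ ^ 2 - L * μ + L ^ 2))
    (h r : ℝ → ℝ)
    (hh1 : ∀ t ∈ Ioo 0 (1 / L),
      h t = ((μp * (1 - L * t) +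
        Real.sqrt ((L - μ) * (μ - μp) * (2 - L * t) * μp * t + (L - μ) ^ 2)) /
          (L - μ + μp)) ^ 2)
    (hh2 : ∀ t ∈ Icc (1 / L) (3 / c),
      h t = (L * t - 2) * (μ * t - 2) * μp * t / ((L + μ - μp) * t - 2) + 1)
    (hh3 : ∀ t ∈ Ioo (3 / c) (2 / L),
      h t = (L * t - 1) ^ 2 / ((L * t - 1) ^ 2 + μp * t * (2 - L * t)))
    (hr : ∀ t, r t = L * μ * (L + μ - μp) * t ^ 3 -
      (L ^ 2 - μp * (L + μ) + 5 * L * μ + μ ^ 2) * t ^ 2 + 4 * (L + μ) * t - 4) :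
    (∀ tbar ∈ Icc (1 / L) (3 / c), r tbar = 0 →
        ∀ t ∈ Ioo 0 (2 / L), h tbar ≤ h t) ∧
    ((∀ t ∈ Icc (1 / L) (3 / c), r t ≠ 0) →
        ∀ t ∈ Ioo 0 (2 / L), h (3 / c) ≤ h t) := by
  have harg : 0 ≤ μ ^ 2 - L * μ + L ^ 2 := by nlinarith
  have hσsq : (Real.sqrt (μ ^ 2 - L * μ + L ^ 2)) ^ 2 = μ ^ 2 - L * μ + L ^ 2 :=
    Real.sq_sqrt harg
  set σ := Real.sqrt (μ ^ 2 - L * μ + L ^ 2) with hσdef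
  have hσnn : 0 ≤ σ := Real.sqrt_nonneg _
  have hσm : -μ < σ := by nlinarith [hσsq, hσnn, neg_nonneg.2 hμ]
  have hσL : σ ≤ L - μ := by nlinarith [hσsq, hσnn]
  have hσ3 : L - 2 * μ < 2 * σ := by nlinarith [hσsq, hσnn, sq_nonneg (L - 2 * μ - 2 * σ)]
  have hcL : L < c := by rw [hc]; linarith
  have hc2L : c ≤ 2 * L := by rw [hc]; linarith
  have hc3 : 3 * L < 2 * c := by rw [hc]; linarith
  have hc2 : c ^ 2 = 2 * (L + μ) * c - 3 * L * μ := by rw [hc]; linear_combination hσsq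
  have hc0 : 0 < c := lt_trans hL hcL
  have e1 : L * (1 / L) = 1 := by field_simp
  have e2 : c * (1 / L) ≤ 3 := by rw [mul_one_div, div_le_iff₀ hL]; linarith
  have e3 : c * (3 / c) = 3 := by field_simp
  have e4 : 1 ≤ L * (3 / c) := by
    rw [show L * (3 / c) = 3 * L / c by ring, le_div_iff₀ hc0]; linarith
  have master : ∀ s, 1 ≤ L * s → c * s ≤ 3 →
      (∀ u, 1 ≤ L * u → c * u ≤ 3 → 0 ≤ (u - s) * (L * μ * (L + μ - μp) * s ^ 3 -
        (L ^ 2 - μp * (L + μ) + 5 * L * μ + μ ^ 2) * s ^ 2 + 4 * (L + μ) * s - 4)) →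
      ∀ t ∈ Ioo (0:ℝ) (2 / L), h s ≤ h t := by
    intro s hs1 hs2 hordAll t ht
    obtain ⟨ht0, htU⟩ := ht
    have hsIcc : s ∈ Icc (1 / L) (3 / c) :=
      ⟨(div_le_iff₀ hL).2 (by linarith), (le_div_iff₀ hc0).2 (by linarith)⟩
    rw [hh2 s hsIcc]
    rcases lt_or_ge t (1 / L) with hA | hB
    · rw [hh1 t (mem_Ioo.2 ⟨ht0, hA⟩)]
      have step1 := aux_mono L μ μp c s (1 / L) hL hμ hμp hμpL hc2 hcL hc3 hc2L
        e1.ge e2 hs1 hs2 (hordAll (1 / L) e1.ge e2)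
      refine step1.trans ?_
      rw [← aux_I1 L μ μp (1 / L) hL hμ hμp e1]
      exact aux_region1 L μ μp t hL hμ hμp hμpL ht0 (by rw [lt_div_iff₀ hL] at hA; linarith)
    · rcases le_or_gt t (3 / c) with hB2 | hC
      · rw [hh2 t ⟨hB, hB2⟩]
        have ht1 : 1 ≤ L * t := by rw [div_le_iff₀ hL] at hB; linarith
        have ht2 : c * t ≤ 3 := by rw [le_div_iff₀ hc0] at hB2; linarith
        exact aux_mono L μ μp c s t hL hμ hμp hμpL hc2 hcL hc3 hc2L
          ht1 ht2 hs1 hs2 (hordAll t ht1 ht2)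
      · rw [hh3 t (mem_Ioo.2 ⟨hC, htU⟩)]
        have hrel : L * μ * (3 / c) ^ 2 - 2 * (L + μ) * (3 / c) + 3 = 0 := by
          field_simp
          linear_combination 3 * hc2
        have step1 := aux_mono L μ μp c s (3 / c) hL hμ hμp hμpL hc2 hcL hc3 hc2L
          e4 e3.le hs1 hs2 (hordAll (3 / c) e4 e3.le)
        refine step1.trans ?_
        rw [aux_I3 L μ μp c (3 / c) hL hμ hμp hc3 e4 e3.le hrel]
        exact aux_region3 L μp (3 / c) t hL hμp e4 hC.le
          (by rw [lt_div_iff₀ hL] at htU; linarith)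
  constructor
  · intro tbar htb hroot t ht
    refine master tbar ?_ ?_ ?_ t ht
    · have := htb.1; rw [div_le_iff₀ hL] at this; linarith
    · have := htb.2; rw [le_div_iff₀ hc0] at this; linarith
    · intro u hu1 hu2
      have hz : L * μ * (L + μ - μp) * tbar ^ 3 -
          (L ^ 2 - μp * (L + μ) + 5 * L * μ + μ ^ 2) * tbar ^ 2 + 4 * (L + μ) * tbar - 4 = 0 := by
        rw [← hr tbar]; exact hroot
      rw [hz, mul_zero]
  · intro hnz t ht
    have h1Lle : 1 / L ≤ 3 / c := by rw [div_le_div_iff₀ hL hc0]; linarith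
    have h1Lmem : 1 / L ∈ Icc (1 / L) (3 / c) := ⟨le_refl _, h1Lle⟩
    have hs0mem : 3 / c ∈ Icc (1 / L) (3 / c) := ⟨h1Lle, le_refl _⟩
    have hr1L : r (1 / L) ≤ 0 := by
      have hval : r (1 / L) = (μp - L) / L := by rw [hr]; field_simp; ring
      rw [hval]
      apply div_nonpos_of_nonpos_of_nonneg (by linarith) hL.le
    have hrs0 : r (3 / c) < 0 := by
      rcases lt_trichotomy (r (3 / c)) 0 with hneg | h0 | hpos
      · exact hneg
      · exact absurd h0 (hnz _ hs0mem)
      · exfalso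
        have hfe : r = fun x => L * μ * (L + μ - μp) * x ^ 3 -
            (L ^ 2 - μp * (L + μ) + 5 * L * μ + μ ^ 2) * x ^ 2 + 4 * (L + μ) * x - 4 :=
          funext hr
        have hcont : ContinuousOn r (Icc (1 / L) (3 / c)) := by
          rw [hfe]; fun_prop
        obtain ⟨x, hx, hx0⟩ := intermediate_value_Icc h1Lle hcont ⟨hr1L, hpos.le⟩
        exact hnz x hx hx0
    refine master (3 / c) e4 e3.le ?_ t ht
    intro u hu1 hu2
    have hus : u ≤ 3 / c := by rw [le_div_iff₀ hc0]; linarith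
    have hz : L * μ * (L + μ - μp) * (3 / c) ^ 3 -
        (L ^ 2 - μp * (L + μ) + 5 * L * μ + μ ^ 2) * (3 / c) ^ 2 + 4 * (L + μ) * (3 / c) - 4
        = r (3 / c) := (hr (3 / c)).symm
    rw [hz]
    nlinarith [mul_nonneg (sub_nonneg.2 hus) (neg_nonneg.2 hrs0.le)]
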